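/- Let L be a finite-dimensional Lie algebra with dim L ≥ 2 over a field F. Then the induced subgraph of the comaximal graph Γ(L) obtained by deleting all vertices contained in the Frattini subalgebra F(L) is connected with diameter at most 3. In particular, if F(L) = 0, then Γ(L) is connected of diameter at most 3. -/

import Mathlib

open Module

/-- The comaximal graph of a Lie algebra, restricted to the subalgebras
satisfying a predicate `P` (among the nontrivial proper ones). -/
def comaximalGraphOn (F : Type*) [Field F] (L : Type*) [LieRing L] [LieAlgebra F L]
    (P : LieSubalgebra F L → Prop) :
    SimpleGraph {A : LieSubalgebra F L // A ≠ ⊥ ∧ A ≠ ⊤ ∧ P A} where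
  Adj A B := A ≠ B ∧ (A.val ⊔ B.val = ⊤)
  symm := by
    constructor
    rintro A B ⟨h₁, h₂⟩
    exact ⟨h₁.symm, by rw [sup_comm]; exact h₂⟩
  loopless := ⟨fun A => by rintro ⟨h, -⟩; exact h rfl⟩

section Aux

variable (F : Type*) [Field F] (L : Type*) [LieRing L] [LieAlgebra F L]

/-- The one-dimensional (or zero) Lie subalgebra spanned by a single element. -/
def lineSubalg (x : L) : LieSubalgebra F L :=
  { Submodule.span F ({x} : Set L) with
    lie_mem' := by
      intro a b ha hb
      obtain ⟨c, rfl⟩ := Submodule.mem_span_singleton.mp ha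
      obtain ⟨d, rfl⟩ := Submodule.mem_span_singleton.mp hb
      have : ⁅c • x, d • x⁆ = (0 : L) := by
        rw [smul_lie, lie_smul, lie_self, smul_zero, smul_zero]
      show ⁅c • x, d • x⁆ ∈ Submodule.span F ({x} : Set L)
      rw [this]
      exact zero_mem _ }

theorem mem_lineSubalg (x : L) : x ∈ lineSubalg F L x :=
  Submodule.mem_span_singleton_self x

theorem lineSubalg_ne_top [FiniteDimensional F L] (hdim : 2 ≤ finrank F L) (x : L) :
    lineSubalg F L x ≠ ⊤ := by
  intro h
  rcases eq_or_ne x 0 with rfl | hx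
  · have h0 : (0 : L) ∈ lineSubalg F L 0 := mem_lineSubalg F L 0
    have : Nontrivial L := Module.nontrivial_of_finrank_pos (R := F) (by omega)
    obtain ⟨y, hy⟩ := exists_ne (0 : L)
    have : y ∈ lineSubalg F L 0 := h ▸ trivial
    have : y ∈ Submodule.span F ({(0 : L)} : Set L) := this
    rw [Submodule.span_zero_singleton] at this
    exact hy this
  · have hspan : Submodule.span F ({x} : Set L) = ⊤ := by
      have := congrArg (fun K : LieSubalgebra F L => (K : Submodule F L)) h
      simpa [lineSubalg] using this
    have h1 : finrank F (Submodule.span F ({x} : Set L)) = 1 := finrank_span_singleton hx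
    rw [hspan, finrank_top] at h1
    omega

variable [FiniteDimensional F L]

theorem exists_le_coatom' {A : LieSubalgebra F L} (hA : A ≠ ⊤) :
    ∃ M : LieSubalgebra F L, IsCoatom M ∧ A ≤ M :=
  (eq_top_or_exists_le_coatom A).resolve_left hA

theorem coatom_ne_bot (hdim : 2 ≤ finrank F L) {M : LieSubalgebra F L} (hM : IsCoatom M) :
    M ≠ ⊥ := by
  rintro rfl
  have : Nontrivial L := Module.nontrivial_of_finrank_pos (R := F) (by omega)
  obtain ⟨x, hx⟩ := exists_ne (0 : L)
  have hlb : (⊥ : LieSubalgebra F L) < lineSubalg F L x := by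
    refine lt_of_le_of_ne bot_le fun h => ?_
    have : x ∈ (⊥ : LieSubalgebra F L) := h ▸ mem_lineSubalg F L x
    exact hx ((LieSubalgebra.mem_bot _).mp this)
  exact lineSubalg_ne_top F L hdim x (hM.2 _ hlb)

theorem coatom_not_le_frattini (hdim : 2 ≤ finrank F L) {M : LieSubalgebra F L}
    (hM : IsCoatom M) : ¬ M ≤ sInf {M : LieSubalgebra F L | IsCoatom M} := by
  intro hle
  have hΦM : sInf {M : LieSubalgebra F L | IsCoatom M} ≤ M := sInf_le hM
  have hMeq : M = sInf {M : LieSubalgebra F L | IsCoatom M} := le_antisymm hle hΦM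
  -- every coatom equals M
  have huniq : ∀ N : LieSubalgebra F L, IsCoatom N → N = M := by
    intro N hN
    have : M ≤ N := hMeq ▸ sInf_le hN
    rcases this.lt_or_eq with h | h
    · exact absurd (hM.2 _ h) hN.1
    · exact h.symm
  obtain ⟨x, -, hxM⟩ := SetLike.exists_of_lt (lt_of_le_of_ne le_top hM.1)
  obtain ⟨N, hN, hlineN⟩ := exists_le_coatom' F L (lineSubalg_ne_top F L hdim x)
  exact hxM ((huniq N hN) ▸ hlineN (mem_lineSubalg F L x))

theorem exists_coatom_adj (hdim : 2 ≤ finrank F L) {A : LieSubalgebra F L} (hA : A ≠ ⊤)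
    (hAΦ : ¬ A ≤ sInf {M : LieSubalgebra F L | IsCoatom M}) :
    ∃ M : LieSubalgebra F L, IsCoatom M ∧ ¬ A ≤ M ∧ A ⊔ M = ⊤ := by
  have : ∃ M ∈ {M : LieSubalgebra F L | IsCoatom M}, ¬ A ≤ M := by
    by_contra h
    push_neg at h
    exact hAΦ (le_sInf h)
  obtain ⟨M, hM, hAM⟩ := this
  refine ⟨M, hM, hAM, ?_⟩
  have : M < A ⊔ M := lt_of_le_of_ne le_sup_right fun h => hAM (h ▸ le_sup_left)
  exact hM.2 _ this

theorem coatom_sup_coatom {M N : LieSubalgebra F L} (hM : IsCoatom M) (hN : IsCoatom N)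
    (hMN : M ≠ N) : M ⊔ N = ⊤ := by
  have hNM : ¬ N ≤ M := by
    intro h
    rcases h.lt_or_eq with h' | h'
    · exact hM.1 (hN.2 _ h')
    · exact hMN h'.symm
  have : M < M ⊔ N := lt_of_le_of_ne le_sup_left fun h => hNM (le_sup_right.trans h.ge)
  exact hM.2 _ this

/-- The main helper lemma: connectivity and diameter bound for the comaximal graph
on any predicate that holds for all coatoms and forces vertices out of the Frattini
subalgebra. -/
theorem helper (hdim : 2 ≤ finrank F L) (P : LieSubalgebra F L → Prop)
    (hP : ∀ M : LieSubalgebra F L, IsCoatom M → P M)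
    (hline : ∀ A : LieSubalgebra F L, ¬ A ≤ sInf {M : LieSubalgebra F L | IsCoatom M} → P A)
    (hvert : ∀ A : LieSubalgebra F L, A ≠ ⊥ → A ≠ ⊤ → P A →
      ¬ A ≤ sInf {M : LieSubalgebra F L | IsCoatom M}) :
    (comaximalGraphOn F L P).Connected ∧ ∀ u v, (comaximalGraphOn F L P).dist u v ≤ 3 := by
  set Φ := sInf {M : LieSubalgebra F L | IsCoatom M} with hΦ
  set G := comaximalGraphOn F L P with hG
  -- a vertex exists
  have hbotne : (⊥ : LieSubalgebra F L) ≠ ⊤ := by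
    intro h
    have : Nontrivial L := Module.nontrivial_of_finrank_pos (R := F) (by omega)
    obtain ⟨x, hx⟩ := exists_ne (0 : L)
    exact hx ((LieSubalgebra.mem_bot _).mp (h ▸ (LieSubalgebra.mem_top x : x ∈ (⊤ : LieSubalgebra F L))))
  obtain ⟨M₀, hM₀, -⟩ := exists_le_coatom' F L hbotne
  have hΦtop : Φ ≠ ⊤ := fun h => hM₀.1 (top_le_iff.mp (h ▸ sInf_le hM₀))
  obtain ⟨x₀, -, hx₀⟩ := SetLike.exists_of_lt (lt_of_le_of_ne (le_top : Φ ≤ ⊤) hΦtop)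
  have hx₀0 : x₀ ≠ 0 := fun h => hx₀ (h ▸ zero_mem _)
  have hlineΦ : ¬ lineSubalg F L x₀ ≤ Φ := fun h => hx₀ (h (mem_lineSubalg F L x₀))
  have hv₀ : (lineSubalg F L x₀ ≠ ⊥ ∧ lineSubalg F L x₀ ≠ ⊤ ∧ P (lineSubalg F L x₀)) := by
    refine ⟨fun h => hx₀0 ((LieSubalgebra.mem_bot _).mp (h ▸ mem_lineSubalg F L x₀)),
      lineSubalg_ne_top F L hdim x₀, hline _ hlineΦ⟩
  have hne : Nonempty {A : LieSubalgebra F L // A ≠ ⊥ ∧ A ≠ ⊤ ∧ P A} := ⟨⟨_, hv₀⟩⟩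
  -- short walks between any two vertices
  have key : ∀ u v : {A : LieSubalgebra F L // A ≠ ⊥ ∧ A ≠ ⊤ ∧ P A},
      ∃ w : G.Walk u v, w.length ≤ 3 := by
    intro u v
    rcases eq_or_ne u v with rfl | huv
    · exact ⟨SimpleGraph.Walk.nil, by simp⟩
    obtain ⟨Mu, hMu, hMuA, hMusup⟩ :=
      exists_coatom_adj F L hdim u.2.2.1 (hvert u.1 u.2.1 u.2.2.1 u.2.2.2)
    obtain ⟨Mv, hMv, hMvA, hMvsup⟩ :=
      exists_coatom_adj F L hdim v.2.2.1 (hvert v.1 v.2.1 v.2.2.1 v.2.2.2)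
    set Mu' : {A : LieSubalgebra F L // A ≠ ⊥ ∧ A ≠ ⊤ ∧ P A} :=
      ⟨Mu, coatom_ne_bot F L hdim hMu, hMu.1, hP _ hMu⟩ with hMu'
    set Mv' : {A : LieSubalgebra F L // A ≠ ⊥ ∧ A ≠ ⊤ ∧ P A} :=
      ⟨Mv, coatom_ne_bot F L hdim hMv, hMv.1, hP _ hMv⟩ with hMv'
    have e₁ : G.Adj u Mu' := by
      show _ ∧ _
      refine ⟨fun h => hMuA ?_, hMusup⟩
      rw [show u.val = Mu from congrArg Subtype.val h]
    have e₂ : G.Adj v Mv' := by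
      show _ ∧ _
      refine ⟨fun h => hMvA ?_, hMvsup⟩
      rw [show v.val = Mv from congrArg Subtype.val h]
    rcases eq_or_ne Mu Mv with rfl | hMM
    · have e₂' : G.Adj Mu' v := by
        have := G.adj_symm e₂
        exact this
      exact ⟨SimpleGraph.Walk.cons e₁ (SimpleGraph.Walk.cons e₂' SimpleGraph.Walk.nil), by simp⟩
    · have e₃ : G.Adj Mu' Mv' := by
        show _ ∧ _
        refine ⟨fun h => hMM (congrArg Subtype.val h), coatom_sup_coatom F L hMu hMv hMM⟩
      exact ⟨SimpleGraph.Walk.cons e₁ (SimpleGraph.Walk.cons e₃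
        (SimpleGraph.Walk.cons (G.adj_symm e₂) SimpleGraph.Walk.nil)), by simp⟩
  have hpre : G.Preconnected := fun u v => (key u v).choose.reachable
  refine ⟨SimpleGraph.Connected.mk (nonempty := hne) hpre, fun u v => ?_⟩
  obtain ⟨w, hw⟩ := key u v
  exact le_trans (SimpleGraph.dist_le w) hw

end Aux

/-- If `dim L ≥ 2`, the induced subgraph of the comaximal graph `Γ(L)` on the
vertices not contained in the Frattini subalgebra is connected of diameter at
most 3; in particular if the Frattini subalgebra is trivial then `Γ(L)` itself
is connected of diameter at most 3. -/
theorem comaximal_graph_del_frattini_connected_diam_le_three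
    (F : Type*) [Field F] (L : Type*) [LieRing L] [LieAlgebra F L]
    [FiniteDimensional F L] (hdim : 2 ≤ finrank F L) :
    ((comaximalGraphOn F L
        (fun A => ¬ A ≤ sInf {M : LieSubalgebra F L | IsCoatom M})).Connected ∧
      ∀ u v, (comaximalGraphOn F L
        (fun A => ¬ A ≤ sInf {M : LieSubalgebra F L | IsCoatom M})).dist u v ≤ 3) ∧
    (sInf {M : LieSubalgebra F L | IsCoatom M} = ⊥ →
      (comaximalGraphOn F L (fun _ => True)).Connected ∧
        ∀ u v, (comaximalGraphOn F L (fun _ => True)).dist u v ≤ 3) := by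
  constructor
  · exact helper F L hdim _ (fun M hM => coatom_not_le_frattini F L hdim hM)
      (fun A h => h) (fun A _ _ h => h)
  · intro h0
    exact helper F L hdim _ (fun _ _ => trivial) (fun _ _ => trivial)
      (fun A hA _ _ => by rw [h0, le_bot_iff]; exact hA)
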